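/- For z on the circle Γ_n around the n-th Neumann eigenvalue, the boundary evaluation of the Neumann resolvent satisfies ‖δ₀ R^N(z)‖ = ‖(1/(√z sin(√z L))) cos(√z(·-L))‖_{L²(0,L)} ≤ C/n uniformly in z ∈ Γ_n, and similarly for δ_L. -/

import Mathlib

open Real intervalIntegral

set_option maxHeartbeats 2000000

private lemma aux_norm_sq (z : ℂ) : ‖z‖ ^ 2 = z.re ^ 2 + z.im ^ 2 := by
  rw [Complex.sq_norm, Complex.normSq_apply]; ring

private lemma aux_le_of_sq (x y : ℝ) (hy : 0 ≤ y) (h : x ^ 2 ≤ y ^ 2) : x ≤ y :=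
  le_of_pow_le_pow_left₀ two_ne_zero hy h

private lemma aux_norm_sin_sq (w : ℂ) :
    ‖Complex.sin w‖ ^ 2 = Real.sin w.re ^ 2 + Real.sinh w.im ^ 2 := by
  have h : Complex.sin w =
      ((Real.sin w.re * Real.cosh w.im : ℝ) : ℂ) +
        ((Real.cos w.re * Real.sinh w.im : ℝ) : ℂ) * Complex.I := by
    rw [Complex.sin_eq]; push_cast; ring
  have hre : (Complex.sin w).re = Real.sin w.re * Real.cosh w.im := by
    rw [h]; simp only [Complex.add_re, Complex.mul_re, Complex.ofReal_re, Complex.ofReal_im,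
      Complex.I_re, Complex.I_im]; ring
  have him : (Complex.sin w).im = Real.cos w.re * Real.sinh w.im := by
    rw [h]; simp only [Complex.add_im, Complex.mul_im, Complex.ofReal_re, Complex.ofReal_im,
      Complex.I_re, Complex.I_im]; ring
  rw [aux_norm_sq, hre, him]
  nlinarith [Real.sin_sq_add_cos_sq w.re, Real.cosh_sq w.im]

private lemma aux_norm_cos_sq_le (w : ℂ) :
    ‖Complex.cos w‖ ^ 2 ≤ Real.cosh w.im ^ 2 := by
  have h : Complex.cos w =
      ((Real.cos w.re * Real.cosh w.im : ℝ) : ℂ) +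
        ((-(Real.sin w.re * Real.sinh w.im) : ℝ) : ℂ) * Complex.I := by
    rw [Complex.cos_eq]; push_cast; ring
  have hre : (Complex.cos w).re = Real.cos w.re * Real.cosh w.im := by
    rw [h]; simp only [Complex.add_re, Complex.mul_re, Complex.ofReal_re, Complex.ofReal_im,
      Complex.I_re, Complex.I_im]; ring
  have him : (Complex.cos w).im = -(Real.sin w.re * Real.sinh w.im) := by
    rw [h]; simp only [Complex.add_im, Complex.mul_im, Complex.ofReal_re, Complex.ofReal_im,
      Complex.I_re, Complex.I_im]; ring
  rw [aux_norm_sq, hre, him]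
  nlinarith [Real.sin_sq_add_cos_sq w.re, Real.cosh_sq w.im, sq_nonneg (Real.sin w.re),
    sq_nonneg (Real.sinh w.im)]

private lemma aux_sin_lower {ρ a : ℝ} (hρ0 : 0 < ρ) (hρπ : ρ ≤ π) (ha : |a| ≤ ρ) :
    Real.sin ρ / ρ * |a| ≤ |Real.sin a| := by
  have hb0 : 0 ≤ |a| := abs_nonneg a
  have habs : |Real.sin a| = Real.sin |a| := by
    rcases le_or_gt 0 a with h | h
    · rw [abs_of_nonneg h, abs_of_nonneg (Real.sin_nonneg_of_nonneg_of_le_pi h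
        (le_trans (by rwa [abs_of_nonneg h] at ha) hρπ))]
    · have hge : -π ≤ a := by
        have := (abs_le.mp ha).1; linarith
      rw [abs_of_neg h, Real.sin_neg,
        abs_of_nonpos (Real.sin_nonpos_of_nonpos_of_neg_pi_le h.le hge)]
  rw [habs]
  set b := |a| with hbdef
  have hbρ : b ≤ ρ := ha
  have hconc := strictConcaveOn_sin_Icc.concaveOn
  have h0m : (0 : ℝ) ∈ Set.Icc 0 π := ⟨le_refl 0, Real.pi_pos.le⟩
  have hρm : ρ ∈ Set.Icc 0 π := ⟨hρ0.le, hρπ⟩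
  have ht0 : (0:ℝ) ≤ 1 - b / ρ := by
    have : b / ρ ≤ 1 := (div_le_one hρ0).mpr hbρ
    linarith
  have ht1 : (0:ℝ) ≤ b / ρ := div_nonneg hb0 hρ0.le
  have hsum : (1 - b / ρ) + b / ρ = 1 := by ring
  have hkey := hconc.2 h0m hρm ht0 ht1 hsum
  simp only [smul_eq_mul, mul_zero, Real.sin_zero, zero_add] at hkey
  have hbb : b / ρ * ρ = b := by field_simp
  rw [hbb] at hkey
  calc Real.sin ρ / ρ * b = b / ρ * Real.sin ρ := by ring
    _ ≤ Real.sin b := by linarith [hkey]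

private lemma aux_num1 (x M : ℝ) (hx : 1 ≤ x) (hM : 2 < M) : (2 * x - 1) * 2 ≤ M * x ^ 2 := by
  nlinarith [sq_nonneg (x - 1)]

private lemma aux_key_int (L : ℝ) (hL : 0 < L) (f : ℝ → ℂ) (hf : Continuous f) (B : ℝ)
    (hB : ∀ y ∈ Set.Icc (0:ℝ) L, ‖f y‖ ≤ B) :
    (∫ y in (0 : ℝ)..L, ‖f y‖ ^ 2) ≤ L * B ^ 2 := by
  have h1 : ∀ y ∈ Set.Icc (0:ℝ) L, ‖f y‖ ^ 2 ≤ B ^ 2 := fun y hy =>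
    pow_le_pow_left₀ (norm_nonneg _) (hB y hy) 2
  calc (∫ y in (0 : ℝ)..L, ‖f y‖ ^ 2) ≤ ∫ _ in (0 : ℝ)..L, B ^ 2 := by
        apply intervalIntegral.integral_mono_on hL.le _ (intervalIntegrable_const) h1
        exact ((hf.norm.pow 2)).intervalIntegrable _ _
    _ = L * B ^ 2 := by simp

/-- Boundary evaluation of the Neumann resolvent: for `z` on the circle `Γ_n` around
the `n`-th Neumann eigenvalue, the `L²(0,L)`-norm of `y ↦ R^N(a,y;z)` for `a ∈ {0,L}`
is bounded by `C/n`, uniformly in `z ∈ Γ_n`. -/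
theorem neumann_resolvent_boundary_bound (L M : ℝ) (hL : 0 < L) (hM : 2 < M) :
    ∃ C : ℝ, 0 < C ∧ ∀ n : ℕ, 1 ≤ n → ∀ z s : ℂ, s ^ 2 = z →
      ‖z - (((π * n / L) ^ 2 : ℝ) : ℂ)‖ = (π ^ 2 / L ^ 2) * (2 * (n : ℝ) - 1) / M →
      let R : ℝ → ℝ → ℂ := fun x y =>
        -(Complex.cos (s * ((min x y : ℝ) : ℂ)) *
            Complex.cos (s * (((max x y : ℝ) : ℂ) - (L : ℂ)))) /
          (s * Complex.sin (s * (L : ℂ)))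
      (∫ y in (0 : ℝ)..L, ‖R 0 y‖ ^ 2) ≤ (C / n) ^ 2 ∧
        (∫ y in (0 : ℝ)..L, ‖R L y‖ ^ 2) ≤ (C / n) ^ 2 := by
  have hπ := Real.pi_pos
  have hM0 : (0:ℝ) < M := by linarith
  set ρ : ℝ := 2 * π / M with hρdef
  have hρ0 : 0 < ρ := by positivity
  have hρπ : ρ < π := by
    rw [hρdef, div_lt_iff₀ hM0]
    have h := mul_lt_mul_of_pos_left hM hπ
    linarith
  have hsinρ : 0 < Real.sin ρ := Real.sin_pos_of_pos_of_lt_pi hρ0 hρπ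
  set c₁ : ℝ := Real.sin ρ / ρ with hc₁def
  have hc₁0 : 0 < c₁ := by positivity
  have hc₁1 : c₁ ≤ 1 := by
    rw [hc₁def, div_le_one hρ0]; exact Real.sin_le hρ0.le
  set κ : ℝ := π ^ 2 * c₁ / (6 * L * M) with hκdef
  have hκ0 : 0 < κ := by positivity
  set C : ℝ := Real.sqrt L * Real.cosh ρ / κ with hCdef
  have hcosh0 : 0 < Real.cosh ρ := Real.cosh_pos ρ
  have hsqL : 0 < Real.sqrt L := Real.sqrt_pos.mpr hL
  refine ⟨C, by positivity, ?_⟩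
  intro n hn z s hs hz R
  have hn1 : (1 : ℝ) ≤ (n : ℝ) := by exact_mod_cast hn
  have hn0 : (0 : ℝ) < (n : ℝ) := by linarith
  -- normalize the square root
  set σ : ℂ := if 0 ≤ s.re then s else -s with hσdef
  have hσ2 : σ ^ 2 = z := by
    rw [hσdef]; split_ifs with h
    · exact hs
    · rw [neg_pow]; simpa using hs
  have hσre : 0 ≤ σ.re := by
    rw [hσdef]; split_ifs with h
    · exact h
    · simp only [Complex.neg_re]; linarith [not_le.mp h]
  have hσn : ‖σ‖ = ‖s‖ := by rw [hσdef]; split_ifs <;> simp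
  have hσim : |σ.im| = |s.im| := by rw [hσdef]; split_ifs <;> simp
  have hσsin : ‖Complex.sin (σ * (L : ℂ))‖ = ‖Complex.sin (s * (L : ℂ))‖ := by
    rw [hσdef]; split_ifs with h
    · rfl
    · rw [show (-s) * (L:ℂ) = -(s * L) by ring, Complex.sin_neg, norm_neg]
  set W : ℂ := σ * (L : ℂ) - ((π * (n : ℝ) : ℝ) : ℂ) with hWdef
  have hprod : W * (σ * (L : ℂ) + ((π * (n : ℝ) : ℝ) : ℂ)) =
      ((L ^ 2 : ℝ) : ℂ) * (z - (((π * n / L) ^ 2 : ℝ) : ℂ)) := by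
    rw [hWdef, ← hσ2]
    have hLne : (L : ℂ) ≠ 0 := by exact_mod_cast hL.ne'
    push_cast
    field_simp
    ring
  have hnormprod : ‖W‖ * ‖σ * (L : ℂ) + ((π * (n : ℝ) : ℝ) : ℂ)‖ =
      L ^ 2 * (π ^ 2 / L ^ 2 * (2 * (n : ℝ) - 1) / M) := by
    rw [← norm_mul, hprod, norm_mul, hz, Complex.norm_real, Real.norm_eq_abs, abs_of_pos (by positivity)]
  have hplus_lb : π * (n : ℝ) ≤ ‖σ * (L : ℂ) + ((π * (n : ℝ) : ℝ) : ℂ)‖ := by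
    have hre : (σ * (L : ℂ) + ((π * (n : ℝ) : ℝ) : ℂ)).re = σ.re * L + π * n := by
      simp [Complex.add_re, Complex.mul_re]
    have h2 := Complex.re_le_norm (σ * (L : ℂ) + ((π * (n : ℝ) : ℝ) : ℂ))
    rw [hre] at h2
    have h3 := mul_nonneg hσre hL.le
    linarith
  have hnormz : ‖σ‖ ^ 2 = ‖z‖ := by rw [← hσ2]; simp [norm_pow]
  have hzub : ‖z‖ ≤ (π * n / L) ^ 2 + π ^ 2 / L ^ 2 * (2 * (n : ℝ) - 1) / M := by
    have hadd := norm_add_le (z - (((π * n / L) ^ 2 : ℝ) : ℂ)) ((((π * n / L) ^ 2 : ℝ)) : ℂ)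
    rw [sub_add_cancel] at hadd
    calc ‖z‖ ≤ ‖z - (((π * n / L) ^ 2 : ℝ) : ℂ)‖ + ‖(((π * n / L) ^ 2 : ℝ) : ℂ)‖ := hadd
      _ = (π ^ 2 / L ^ 2 * (2 * (n : ℝ) - 1) / M) + (π * n / L) ^ 2 := by
          rw [hz, Complex.norm_real, Real.norm_eq_abs, abs_of_pos (by positivity)]
      _ = _ := by ring
  have hrn_le : π ^ 2 / L ^ 2 * (2 * (n : ℝ) - 1) / M ≤ (π * n / L) ^ 2 / 2 := by
    rw [div_le_div_iff₀ hM0 (by norm_num)]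
    have h1 : (0:ℝ) < π ^ 2 / L ^ 2 := by positivity
    have key : (2 * (n:ℝ) - 1) * 2 ≤ M * (n:ℝ)^2 := aux_num1 _ _ hn1 hM
    calc π ^ 2 / L ^ 2 * (2 * (n : ℝ) - 1) * 2 = π ^ 2 / L ^ 2 * ((2 * (n:ℝ) - 1) * 2) := by
          ring
      _ ≤ π ^ 2 / L ^ 2 * (M * (n:ℝ)^2) := mul_le_mul_of_nonneg_left key h1.le
      _ = (π * n / L) ^ 2 * M := by field_simp
  have hzlb : (π * n / L) ^ 2 / 2 ≤ ‖z‖ := by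
    have h1 : (π * n / L) ^ 2 - ‖z - (((π * n / L) ^ 2 : ℝ) : ℂ)‖ ≤ ‖z‖ := by
      have h3 := norm_sub_norm_le ((((π * n / L) ^ 2 : ℝ)) : ℂ)
        (((((π * n / L) ^ 2 : ℝ)) : ℂ) - z)
      have h2 : ((((π * n / L) ^ 2 : ℝ)) : ℂ) - (((((π * n / L) ^ 2 : ℝ)) : ℂ) - z) = z := by
        ring
      rw [h2, norm_sub_rev] at h3
      calc (π * n / L) ^ 2 - ‖z - (((π * n / L) ^ 2 : ℝ) : ℂ)‖
          = ‖((((π * n / L) ^ 2 : ℝ)) : ℂ)‖ - ‖z - (((π * n / L) ^ 2 : ℝ) : ℂ)‖ := by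
            rw [Complex.norm_real, Real.norm_eq_abs, abs_of_pos (by positivity)]
        _ ≤ ‖z‖ := h3
    rw [hz] at h1
    linarith [hrn_le]
  have hplus_ub : ‖σ * (L : ℂ) + ((π * (n : ℝ) : ℝ) : ℂ)‖ ≤ 3 * (π * (n : ℝ)) := by
    have h1 : ‖σ * (L : ℂ)‖ ≤ 2 * (π * (n : ℝ)) := by
      apply aux_le_of_sq _ _ (by positivity)
      have h2 : ‖σ * (L : ℂ)‖ ^ 2 = ‖z‖ * L ^ 2 := by
        rw [norm_mul, mul_pow, hnormz, Complex.norm_real, Real.norm_eq_abs, abs_of_pos hL]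
      rw [h2]
      have h3 : ‖z‖ ≤ (3:ℝ)/2 * (π * n / L) ^ 2 := by linarith [hzub, hrn_le]
      calc ‖z‖ * L ^ 2 ≤ (3:ℝ)/2 * (π * n / L) ^ 2 * L ^ 2 :=
            mul_le_mul_of_nonneg_right h3 (sq_nonneg L)
        _ = (3:ℝ)/2 * (π * n) ^ 2 := by field_simp
        _ ≤ (2 * (π * (n:ℝ))) ^ 2 := by
            rw [show (2 * (π * (n:ℝ))) ^ 2 = 4 * (π * (n:ℝ)) ^ 2 by ring]
            have h5 := sq_nonneg (π * (n:ℝ))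
            linarith
    calc ‖σ * (L : ℂ) + ((π * (n : ℝ) : ℝ) : ℂ)‖
        ≤ ‖σ * (L : ℂ)‖ + ‖(((π * (n : ℝ) : ℝ)) : ℂ)‖ := norm_add_le _ _
      _ ≤ 2 * (π * (n : ℝ)) + π * (n : ℝ) := by
          rw [Complex.norm_real, Real.norm_eq_abs, abs_of_pos (by positivity)]; linarith
      _ = 3 * (π * (n : ℝ)) := by ring
  -- upper bound on ‖W‖
  have hWub : ‖W‖ ≤ ρ := by
    have h1 : ‖W‖ * (π * (n:ℝ)) ≤ π ^ 2 * (2 * (n:ℝ) - 1) / M := by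
      have h2 : L ^ 2 * (π ^ 2 / L ^ 2 * (2 * (n : ℝ) - 1) / M)
          = π ^ 2 * (2 * (n:ℝ) - 1) / M := by field_simp
      calc ‖W‖ * (π * (n:ℝ)) ≤ ‖W‖ * ‖σ * (L : ℂ) + ((π * (n : ℝ) : ℝ) : ℂ)‖ :=
            mul_le_mul_of_nonneg_left hplus_lb (norm_nonneg _)
        _ = _ := by rw [hnormprod, h2]
    have h4 : π ^ 2 * (2 * (n:ℝ) - 1) / M ≤ (2 * π / M) * (π * (n:ℝ)) := by
      rw [div_le_iff₀ hM0]
      have : π ^ 2 * (2 * (n:ℝ) - 1) ≤ π ^ 2 * (2 * (n:ℝ)) :=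
        mul_le_mul_of_nonneg_left (by linarith) (sq_nonneg π)
      calc π ^ 2 * (2 * (n:ℝ) - 1) ≤ π ^ 2 * (2 * (n:ℝ)) := this
        _ = 2 * π / M * (π * (n:ℝ)) * M := by field_simp
    have h5 : ‖W‖ * (π * (n:ℝ)) ≤ (2 * π / M) * (π * (n:ℝ)) := le_trans h1 h4
    have h6 : 0 < π * (n:ℝ) := by positivity
    rw [hρdef]
    exact le_of_mul_le_mul_right h5 h6
  -- lower bound on ‖W‖
  have hWlb : π / (3 * M) ≤ ‖W‖ := by
    have h1 : L ^ 2 * (π ^ 2 / L ^ 2 * (2 * (n : ℝ) - 1) / M) ≤ ‖W‖ * (3 * (π * (n:ℝ))) := by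
      calc L ^ 2 * (π ^ 2 / L ^ 2 * (2 * (n : ℝ) - 1) / M)
          = ‖W‖ * ‖σ * (L : ℂ) + ((π * (n : ℝ) : ℝ) : ℂ)‖ := hnormprod.symm
        _ ≤ ‖W‖ * (3 * (π * (n:ℝ))) :=
            mul_le_mul_of_nonneg_left hplus_ub (norm_nonneg _)
    have h2 : π / (3 * M) * (3 * (π * (n:ℝ)))
        ≤ L ^ 2 * (π ^ 2 / L ^ 2 * (2 * (n : ℝ) - 1) / M) := by
      have e1 : L ^ 2 * (π ^ 2 / L ^ 2 * (2 * (n : ℝ) - 1) / M)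
          = π ^ 2 * (2 * (n:ℝ) - 1) / M := by field_simp
      have e2 : π / (3 * M) * (3 * (π * (n:ℝ))) = π ^ 2 * (n:ℝ) / M := by field_simp
      rw [e1, e2, div_le_div_iff₀ hM0 hM0]
      exact mul_le_mul_of_nonneg_right
        (mul_le_mul_of_nonneg_left (by linarith) (sq_nonneg π)) hM0.le
    have h6 : 0 < 3 * (π * (n:ℝ)) := by positivity
    exact le_of_mul_le_mul_right (le_trans h2 h1) h6
  -- imaginary part bound
  have hWim : W.im = σ.im * L := by
    simp [hWdef, Complex.sub_im, Complex.mul_im]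
  have hWnorm_abs : ‖W‖ = ‖W‖ := rfl
  have hsimL : |s.im| * L ≤ ρ := by
    rw [← hσim]
    have e1 : |σ.im| * L = |W.im| := by rw [hWim, abs_mul, abs_of_pos hL]
    rw [e1]
    exact le_trans ((Complex.abs_im_le_norm W).trans_eq hWnorm_abs) hWub
  -- sine lower bound
  have hWre : |W.re| ≤ ρ := le_trans ((Complex.abs_re_le_norm W).trans_eq hWnorm_abs) hWub
  have hsinW : c₁ * (π / (3 * M)) ≤ ‖Complex.sin W‖ := by
    apply aux_le_of_sq _ _ (norm_nonneg _)
    have e1 := aux_norm_sin_sq W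
    have e2 : c₁ * |W.re| ≤ |Real.sin W.re| := by
      rw [hc₁def]; exact aux_sin_lower hρ0 hρπ.le hWre
    have e3 : |W.im| ≤ |Real.sinh W.im| := by
      rw [Real.abs_sinh]; exact Real.self_le_sinh_iff.mpr (abs_nonneg _)
    have e4 : ‖W‖ ^ 2 = W.re ^ 2 + W.im ^ 2 := aux_norm_sq W
    have s1 : (c₁ * (π / (3 * M))) ^ 2 ≤ (c₁ * ‖W‖) ^ 2 :=
      pow_le_pow_left₀ (by positivity) (mul_le_mul_of_nonneg_left hWlb hc₁0.le) 2
    have s3 : c₁ ^ 2 * W.re ^ 2 ≤ Real.sin W.re ^ 2 := by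
      have := pow_le_pow_left₀ (by positivity) e2 2
      calc c₁ ^ 2 * W.re ^ 2 = (c₁ * |W.re|) ^ 2 := by rw [mul_pow, sq_abs]
        _ ≤ |Real.sin W.re| ^ 2 := this
        _ = Real.sin W.re ^ 2 := sq_abs _
    have s4 : c₁ ^ 2 * W.im ^ 2 ≤ Real.sinh W.im ^ 2 := by
      have h7 : W.im ^ 2 ≤ Real.sinh W.im ^ 2 := by
        have := pow_le_pow_left₀ (abs_nonneg _) e3 2
        rwa [sq_abs, sq_abs] at this
      have h8 : c₁ ^ 2 ≤ 1 := pow_le_one₀ hc₁0.le hc₁1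
      calc c₁ ^ 2 * W.im ^ 2 ≤ 1 * W.im ^ 2 :=
            mul_le_mul_of_nonneg_right h8 (sq_nonneg _)
        _ = W.im ^ 2 := one_mul _
        _ ≤ _ := h7
    calc (c₁ * (π / (3 * M))) ^ 2 ≤ (c₁ * ‖W‖) ^ 2 := s1
      _ = c₁ ^ 2 * W.re ^ 2 + c₁ ^ 2 * W.im ^ 2 := by rw [mul_pow, e4]; ring
      _ ≤ Real.sin W.re ^ 2 + Real.sinh W.im ^ 2 := add_le_add s3 s4
      _ = ‖Complex.sin W‖ ^ 2 := e1.symm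
  -- sigma lower bound
  have hσlb : π * n / (2 * L) ≤ ‖σ‖ := by
    apply aux_le_of_sq _ _ (norm_nonneg _)
    rw [hnormz]
    calc (π * n / (2 * L)) ^ 2 = (π * n / L) ^ 2 / 4 := by field_simp; ring
      _ ≤ (π * n / L) ^ 2 / 2 := by
          have h5 := sq_nonneg (π * (n:ℝ) / L)
          linarith
      _ ≤ ‖z‖ := hzlb
  -- denominator lower bound
  have hDlb : κ * n ≤ ‖s * Complex.sin (s * (L : ℂ))‖ := by
    rw [norm_mul, ← hσn, ← hσsin]
    have hsinσL : ‖Complex.sin (σ * (L:ℂ))‖ = ‖Complex.sin W‖ := by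
      have hσL : σ * (L:ℂ) = W + ((π * (n:ℝ) : ℝ):ℂ) := by rw [hWdef]; ring
      rw [hσL, Complex.sin_add]
      have hsin0 : Complex.sin (((π * (n:ℝ) : ℝ):ℂ)) = 0 := by
        rw [← Complex.ofReal_sin, mul_comm π ((n:ℝ)), Real.sin_nat_mul_pi, Complex.ofReal_zero]
      rw [hsin0, mul_zero, add_zero, norm_mul]
      have hcos1 : ‖Complex.cos (((π * (n:ℝ) : ℝ):ℂ))‖ = 1 := by
        rw [← Complex.ofReal_cos, Complex.norm_real]
        have h8 := Real.cos_nat_mul_pi_sub 0 n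
        rw [sub_zero, Real.cos_zero, mul_one] at h8
        rw [mul_comm π ((n:ℝ)), h8]
        simp
      rw [hcos1, mul_one]
    rw [hsinσL]
    calc κ * n = (π * n / (2 * L)) * (c₁ * (π / (3 * M))) := by
          rw [hκdef]; field_simp; ring
      _ ≤ ‖σ‖ * ‖Complex.sin W‖ :=
          mul_le_mul hσlb hsinW (by positivity) (norm_nonneg _)
  have hRdef : R = fun x y =>
      -(Complex.cos (s * ((min x y : ℝ) : ℂ)) *
          Complex.cos (s * (((max x y : ℝ) : ℂ) - (L : ℂ)))) /
        (s * Complex.sin (s * (L : ℂ))) := rfl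
  have hCn : (C / (n : ℝ)) ^ 2 = L * (Real.cosh ρ / (κ * n)) ^ 2 := by
    have h1 : C / (n : ℝ) = Real.sqrt L * (Real.cosh ρ / (κ * n)) := by
      rw [hCdef]; field_simp
    rw [h1, mul_pow, Real.sq_sqrt hL.le]
  have hκn : (0:ℝ) < κ * n := mul_pos hκ0 hn0
  constructor
  · simp only [hRdef]
    rw [hCn]
    apply aux_key_int L hL _ ?_ _ ?_
    · fun_prop
    · intro y hy
      have hmin : min (0:ℝ) y = 0 := min_eq_left hy.1
      have hmax : max (0:ℝ) y = y := max_eq_right hy.1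
      simp only [hmin, hmax, Complex.ofReal_zero, mul_zero, Complex.cos_zero, one_mul]
      rw [norm_div, norm_neg]
      apply div_le_div₀ hcosh0.le ?_ hκn hDlb
      apply aux_le_of_sq _ _ hcosh0.le
      calc ‖Complex.cos (s * ((y:ℂ) - (L:ℂ)))‖ ^ 2
          ≤ Real.cosh ((s * ((y:ℂ) - (L:ℂ))).im) ^ 2 := aux_norm_cos_sq_le _
        _ ≤ Real.cosh ρ ^ 2 := by
            have harg : (s * ((y:ℂ) - (L:ℂ))).im = s.im * (y - L) := by
              simp [Complex.mul_im]
            have h1 : |(s * ((y:ℂ) - (L:ℂ))).im| ≤ ρ := by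
              rw [harg, abs_mul]
              have h9 : |y - L| ≤ L := by
                rw [abs_le]; constructor <;> linarith [hy.1, hy.2]
              calc |s.im| * |y - L| ≤ |s.im| * L :=
                    mul_le_mul_of_nonneg_left h9 (abs_nonneg _)
                _ ≤ ρ := hsimL
            have h2 : Real.cosh ((s * ((y:ℂ) - (L:ℂ))).im) ≤ Real.cosh ρ :=
              Real.cosh_le_cosh.mpr (by rwa [abs_of_pos hρ0])
            exact pow_le_pow_left₀ (Real.cosh_pos _).le h2 2
  · simp only [hRdef]
    rw [hCn]
    apply aux_key_int L hL _ ?_ _ ?_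
    · fun_prop
    · intro y hy
      have hmin : min L y = y := min_eq_right hy.2
      have hmax : max L y = L := max_eq_left hy.2
      simp only [hmin, hmax, sub_self, mul_zero, Complex.cos_zero, mul_one]
      rw [norm_div, norm_neg]
      apply div_le_div₀ hcosh0.le ?_ hκn hDlb
      apply aux_le_of_sq _ _ hcosh0.le
      calc ‖Complex.cos (s * (y:ℂ))‖ ^ 2
          ≤ Real.cosh ((s * (y:ℂ)).im) ^ 2 := aux_norm_cos_sq_le _
        _ ≤ Real.cosh ρ ^ 2 := by
            have harg : (s * (y:ℂ)).im = s.im * y := by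
              simp [Complex.mul_im]
            have h1 : |(s * (y:ℂ)).im| ≤ ρ := by
              rw [harg, abs_mul]
              have h9 : |y| ≤ L := by
                rw [abs_le]; constructor <;> linarith [hy.1, hy.2]
              calc |s.im| * |y| ≤ |s.im| * L :=
                    mul_le_mul_of_nonneg_left h9 (abs_nonneg _)
                _ ≤ ρ := hsimL
            have h2 : Real.cosh ((s * (y:ℂ)).im) ≤ Real.cosh ρ :=
              Real.cosh_le_cosh.mpr (by rwa [abs_of_pos hρ0])
            exact pow_le_pow_left₀ (Real.cosh_pos _).le h2 2
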